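/- Let ψ be a (sub)critical branching mechanism satisfying the Grey condition, u(a,λ) its cumulant semigroup and v(a) = lim_{λ→∞} u(a,λ). Then for fixed b > 0: (i) v(a) = u(b, v(a-b)) for all a > b; (ii) lim_{a→∞} v(a-b)/v(a) = e^{αb}, where α = ψ'(0). -/

import Mathlib

open MeasureTheory Filter intervalIntegral
open scoped ENNReal Topology

private lemma exp_sq_bound_aux : ∀ y : ℝ, 0 ≤ y → Real.exp (-y) - 1 + y ≤ y ^ 2 / 2 := by
  have hd : ∀ x : ℝ, HasDerivAt (fun y : ℝ => 1 - y + y ^ 2 / 2 - Real.exp (-y))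
      (-1 + x + Real.exp (-x)) x := by
    intro x
    have h1 : HasDerivAt (fun y : ℝ => Real.exp (-y)) (-Real.exp (-x)) x := by
      simpa using (hasDerivAt_neg x).exp
    have h2 : HasDerivAt (fun y : ℝ => 1 - y + y ^ 2 / 2) (-1 + x) x := by
      have : HasDerivAt (fun y : ℝ => y ^ 2 / 2) x x := by
        simpa using ((hasDerivAt_pow 2 x).div_const 2)
      exact (((hasDerivAt_const x (1:ℝ)).sub (hasDerivAt_id x)).add this).congr_deriv (by ring)
    exact (h2.sub h1).congr_deriv (by ring)
  have key : MonotoneOn (fun y : ℝ => 1 - y + y ^ 2 / 2 - Real.exp (-y)) (Set.Ici 0) := by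
    apply monotoneOn_of_deriv_nonneg (convex_Ici 0)
    · exact (Continuous.sub (by continuity) (Real.continuous_exp.comp (by continuity))).continuousOn
    · intro x _; exact (hd x).differentiableAt.differentiableWithinAt
    · intro x hx
      rw [(hd x).deriv]
      have hx0 : (0:ℝ) ≤ x := le_of_lt (by simpa using hx)
      nlinarith [Real.add_one_le_exp (-x)]
  intro y hy
  have := key (Set.mem_Ici.2 le_rfl) hy hy
  simp at this
  nlinarith [this]

set_option maxHeartbeats 1000000 in
/-- Let `ψ` be a (sub)critical branching mechanism satisfying
Grey's condition, `u(a,λ)` its cumulant semigroup and `v(a) = lim_{λ→∞} u(a,λ)`, i.e.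
`0 < v(a)` and `∫_{v(a)}^∞ dx/ψ(x) = a`.  Then for fixed `b > 0`:
(i) `v(a) = u(b, v(a-b))` for all `a > b`;
(ii) `lim_{a→∞} v(a-b)/v(a) = e^{αb}`, where `α = ψ'(0)`. -/
theorem extinction_function_asymptotics
    (α β : ℝ) (hα : 0 ≤ α) (hβ : 0 ≤ β)
    (π : Measure ℝ) (hπsupp : π (Set.Iic 0) = 0)
    (hπint : ∫⁻ r, ENNReal.ofReal (min r (r ^ 2)) ∂π ≠ ⊤)
    (ψ : ℝ → ℝ)
    (hψ : ∀ x, ψ x = α * x + β * x ^ 2 + ∫ r, (Real.exp (-x * r) - 1 + x * r) ∂π)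
    (hpos : ∀ x > 0, 0 < ψ x)
    (hGrey : IntegrableOn (fun x => (ψ x)⁻¹) (Set.Ici 1))
    (u : ℝ → ℝ → ℝ)
    (hu : ∀ (a lam : ℝ), 0 ≤ a → 0 < lam →
      0 < u a lam ∧ u a lam ≤ lam ∧ (∫ x in (u a lam)..lam, (ψ x)⁻¹) = a)
    (v : ℝ → ℝ)
    (hv : ∀ a > (0 : ℝ), 0 < v a ∧ (∫ x in Set.Ioi (v a), (ψ x)⁻¹) = a) :
    ∀ b > (0 : ℝ),
      (∀ a, b < a → v a = u b (v (a - b))) ∧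
      Tendsto (fun a => v (a - b) / v a) atTop (𝓝 (Real.exp (α * b))) := by
  -- ### Preliminaries on the measure π
  have hae : ∀ᵐ r ∂π, 0 < r := by
    refine (ae_iff).2 ?_
    simpa [Set.Iic, not_lt] using hπsupp
  have hg : Integrable (fun r => min r (r ^ 2)) π := by
    constructor
    · exact (continuous_id.min (continuous_pow 2)).aestronglyMeasurable
    · rw [hasFiniteIntegral_iff_norm]
      have : ∀ᵐ r ∂π, ENNReal.ofReal ‖min r (r ^ 2)‖ = ENNReal.ofReal (min r (r ^ 2)) := by
        filter_upwards [hae] with r hr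
        rw [Real.norm_eq_abs, abs_of_nonneg (le_min hr.le (by positivity))]
      rw [lintegral_congr_ae this]
      exact hπint.lt_top
  have hE0 : ∀ y : ℝ, 0 ≤ Real.exp (-y) - 1 + y := by
    intro y; nlinarith [Real.add_one_le_exp (-y)]
  -- ### Integrability of the Lévy integrand
  have hInt : ∀ x : ℝ, 0 ≤ x → Integrable (fun r => Real.exp (-x * r) - 1 + x * r) π := by
    intro x hx
    refine Integrable.mono' (hg.const_mul (max x (x^2))) ?_ ?_
    · exact (Continuous.sub (by continuity) (continuous_const)).add
        (continuous_const.mul continuous_id) |>.aestronglyMeasurable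
    · filter_upwards [hae] with r hr
      have h0 : 0 ≤ Real.exp (-x * r) - 1 + x * r := by
        have := hE0 (x * r); simpa [neg_mul] using this
      rw [Real.norm_eq_abs, abs_of_nonneg h0]
      have hxr : 0 ≤ x * r := mul_nonneg hx hr.le
      have h1 : Real.exp (-x * r) - 1 + x * r ≤ (x*r)^2/2 := by
        have := exp_sq_bound_aux (x*r) hxr; simpa [neg_mul] using this
      have h2 : Real.exp (-x * r) - 1 + x * r ≤ x * r := by
        have : Real.exp (-x*r) ≤ 1 := Real.exp_le_one_iff.2 (by nlinarith)
        linarith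
      rcases le_or_gt r 1 with hr1 | hr1
      · have : min r (r^2) = r^2 := min_eq_right (by nlinarith)
        rw [this]
        have : (x*r)^2/2 ≤ x^2 * r^2 := by nlinarith [sq_nonneg (x*r)]
        nlinarith [le_max_right x (x^2), sq_nonneg r]
      · have : min r (r^2) = r := min_eq_left (by nlinarith)
        rw [this]
        have : x ≤ max x (x^2) := le_max_left _ _
        nlinarith
  -- ### ψ is monotone on [0, ∞)
  have hψm : MonotoneOn ψ (Set.Ici 0) := by
    intro x hx y hy hxy
    rw [hψ x, hψ y]
    simp only [Set.mem_Ici] at hx hy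
    have hint : (∫ r, (Real.exp (-x * r) - 1 + x * r) ∂π)
        ≤ ∫ r, (Real.exp (-y * r) - 1 + y * r) ∂π := by
      refine integral_mono_ae (hInt x hx) (hInt y hy) ?_
      filter_upwards [hae] with r hr
      have : Real.exp (-x*r) - Real.exp (-y*r) ≤ (y - x) * r := by
        have h1 : Real.exp (-x*r) - Real.exp (-y*r)
            = Real.exp (-x*r) * (1 - Real.exp (-(y-x)*r)) := by
          rw [mul_sub, mul_one, ← Real.exp_add]; ring_nf
        have h2 : 1 - Real.exp (-(y-x)*r) ≤ (y-x)*r := by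
          nlinarith [Real.add_one_le_exp (-(y-x)*r)]
        have h3 : Real.exp (-x*r) ≤ 1 := Real.exp_le_one_iff.2 (by nlinarith)
        have h4 : 0 ≤ (y-x)*r := mul_nonneg (by linarith) hr.le
        calc Real.exp (-x*r) - Real.exp (-y*r)
            = Real.exp (-x*r) * (1 - Real.exp (-(y-x)*r)) := h1
          _ ≤ 1 * ((y-x)*r) := by
              have h5 : Real.exp (-(y-x)*r) ≤ 1 := Real.exp_le_one_iff.2 (by nlinarith)
              exact mul_le_mul h3 h2 (by linarith) zero_le_one
          _ = (y-x)*r := one_mul _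
      linarith
    nlinarith [mul_le_mul_of_nonneg_left hxy hα,
      mul_le_mul_of_nonneg_left (mul_self_le_mul_self hx hxy) hβ, sq_nonneg x, sq_nonneg y]
  -- ### Integrability of 1/ψ
  have hII : ∀ c d : ℝ, 0 < c → 0 < d →
      IntervalIntegrable (fun x => (ψ x)⁻¹) volume c d := by
    intro c d hc hd
    apply AntitoneOn.intervalIntegrable
    intro x hx y hy hxy
    rw [Set.uIcc_eq_union] at hx
    have hx0 : 0 < x := by
      rcases hx with h | h
      · exact lt_of_lt_of_le hc h.1
      · exact lt_of_lt_of_le hd h.1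
    exact inv_anti₀ (hpos x hx0) (hψm hx0.le (by simp; linarith) hxy)
  have hIOn : ∀ w : ℝ, 0 < w → IntegrableOn (fun x => (ψ x)⁻¹) (Set.Ioi w) := by
    intro w hw
    rcases le_or_gt 1 w with h1 | h1
    · exact hGrey.mono_set (fun x hx => le_of_lt (lt_of_le_of_lt h1 hx))
    · have h2 : IntegrableOn (fun x => (ψ x)⁻¹) (Set.Ioc w 1) :=
        (intervalIntegrable_iff_integrableOn_Ioc_of_le (le_of_lt h1)).1
          (hII w 1 hw one_pos)
      have : Set.Ioi w ⊆ Set.Ioc w 1 ∪ Set.Ici 1 := by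
        intro x hx
        rcases le_or_gt x 1 with h | h
        · exact Or.inl ⟨hx, h⟩
        · exact Or.inr (le_of_lt h)
      exact (h2.union hGrey).mono_set this
  have hsplit : ∀ c d : ℝ, 0 < c → c ≤ d →
      ∫ x in Set.Ioi c, (ψ x)⁻¹ = (∫ x in c..d, (ψ x)⁻¹) + ∫ x in Set.Ioi d, (ψ x)⁻¹ := by
    intro c d hc hcd
    have hd : 0 < d := lt_of_lt_of_le hc hcd
    rw [intervalIntegral.integral_of_le hcd]
    rw [← Set.Ioc_union_Ioi_eq_Ioi hcd]
    rw [setIntegral_union (Set.Ioc_disjoint_Ioi le_rfl) measurableSet_Ioi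
      ((hIOn c hc).mono_set Set.Ioc_subset_Ioi_self) (hIOn d hd)]
  have hposint : ∀ c d : ℝ, 0 < c → c < d → 0 < ∫ x in c..d, (ψ x)⁻¹ := by
    intro c d hc hcd
    exact intervalIntegral.intervalIntegral_pos_of_pos_on (hII c d hc (hc.trans hcd))
      (fun x hx => inv_pos.2 (hpos x (hc.trans hx.1))) hcd
  have hinj : ∀ w₁ w₂ : ℝ, 0 < w₁ → 0 < w₂ →
      (∫ x in Set.Ioi w₁, (ψ x)⁻¹) = (∫ x in Set.Ioi w₂, (ψ x)⁻¹) → w₁ = w₂ := by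
    intro w₁ w₂ h1 h2 heq
    rcases lt_trichotomy w₁ w₂ with h | h | h
    · exfalso
      have := hsplit w₁ w₂ h1 h.le
      have := hposint w₁ w₂ h1 h
      linarith
    · exact h
    · exfalso
      have := hsplit w₂ w₁ h2 h.le
      have := hposint w₂ w₁ h2 h
      linarith
  -- ### lower bound α x ≤ ψ x
  have hψlb : ∀ x : ℝ, 0 ≤ x → α * x ≤ ψ x := by
    intro x hx
    rw [hψ x]
    have h1 : 0 ≤ ∫ r, (Real.exp (-x * r) - 1 + x * r) ∂π := by
      apply MeasureTheory.integral_nonneg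
      intro r
      have := hE0 (x * r); simpa [neg_mul] using this
    nlinarith [sq_nonneg x]
  -- ### the DCT limit
  have hT : Tendsto (fun x : ℝ => ∫ r, min (x * r ^ 2 / 2) r ∂π) (𝓝[>] (0:ℝ)) (𝓝 0) := by
    have key : Tendsto (fun x : ℝ => ∫ r, min (x * r ^ 2 / 2) r ∂π) (𝓝[>] (0:ℝ))
        (𝓝 (∫ r, (0:ℝ) ∂π)) := by
      apply MeasureTheory.tendsto_integral_filter_of_dominated_convergence
        (fun r => min r (r ^ 2))
      · filter_upwards with x
        exact ((continuous_const.mul (continuous_pow 2)).div_const 2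
          |>.min continuous_id).aestronglyMeasurable
      · filter_upwards [Ioo_mem_nhdsGT one_pos] with x hx
        filter_upwards [hae] with r hr
        have hx0 : 0 < x := hx.1
        have h1 : 0 ≤ min (x * r ^ 2 / 2) r := le_min (by positivity) hr.le
        rw [Real.norm_eq_abs, abs_of_nonneg h1]
        rcases le_or_gt r 1 with h | h
        · have : min r (r ^ 2) = r ^ 2 := min_eq_right (by nlinarith)
          rw [this]
          exact le_trans (min_le_left _ _) (by nlinarith [hx.2])
        · have : min r (r ^ 2) = r := min_eq_left (by nlinarith)
          rw [this]
          exact min_le_right _ _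
      · exact hg
      · filter_upwards [hae] with r hr
        have h2 : Tendsto (fun x : ℝ => x * r ^ 2 / 2) (𝓝[>] (0:ℝ)) (𝓝 0) := by
          have hc : Continuous (fun x : ℝ => x * r ^ 2 / 2) := by fun_prop
          have := hc.tendsto (0:ℝ)
          simpa using this.mono_left nhdsWithin_le_nhds
        apply squeeze_zero' ?_ ?_ h2
        · filter_upwards [self_mem_nhdsWithin] with x hx
          have hx' : (0:ℝ) < x := hx
          exact le_min (by positivity) hr.le
        · filter_upwards with x
          exact min_le_left _ _
    simpa using key
  -- ### upper bound ψ x ≤ (α + ε) x near 0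
  have hub : ∀ ε > (0:ℝ), ∀ᶠ x in 𝓝[>] (0:ℝ), ψ x ≤ (α + ε) * x := by
    intro ε hε
    have hsum : Tendsto (fun x : ℝ => β * x + ∫ r, min (x * r ^ 2 / 2) r ∂π)
        (𝓝[>] (0:ℝ)) (𝓝 0) := by
      have hb : Tendsto (fun x : ℝ => β * x) (𝓝[>] (0:ℝ)) (𝓝 0) := by
        have hc : Continuous (fun x : ℝ => β * x) := by fun_prop
        have := hc.tendsto (0:ℝ)
        simpa using this.mono_left nhdsWithin_le_nhds
      simpa using hb.add hT
    have hev : ∀ᶠ x in 𝓝[>] (0:ℝ), β * x + (∫ r, min (x * r ^ 2 / 2) r ∂π) < ε := by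
      have := hsum (Metric.ball_mem_nhds 0 hε)
      filter_upwards [this] with x hx
      have := abs_lt.1 (by simpa [Real.dist_eq] using hx)
      linarith [this.2]
    filter_upwards [hev, Ioo_mem_nhdsGT one_pos] with x hx hx1
    have hx0 : 0 < x := hx1.1
    have hxle1 : x ≤ 1 := hx1.2.le
    have hmin_int : Integrable (fun r => min (x * r ^ 2 / 2) r) π := by
      refine hg.mono' ?_ ?_
      · exact ((continuous_const.mul (continuous_pow 2)).div_const 2
          |>.min continuous_id).aestronglyMeasurable
      · filter_upwards [hae] with r hr
        rw [Real.norm_eq_abs, abs_of_nonneg (le_min (by positivity) hr.le)]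
        rcases le_or_gt r 1 with h | h
        · have h2 : min r (r ^ 2) = r ^ 2 := min_eq_right (by nlinarith)
          rw [h2]; exact le_trans (min_le_left _ _) (by nlinarith)
        · have h2 : min r (r ^ 2) = r := min_eq_left (by nlinarith)
          rw [h2]; exact min_le_right _ _
    have hIle : (∫ r, (Real.exp (-x * r) - 1 + x * r) ∂π)
        ≤ x * ∫ r, min (x * r ^ 2 / 2) r ∂π := by
      rw [← MeasureTheory.integral_const_mul]
      refine integral_mono_ae (hInt x hx0.le) (hmin_int.const_mul x) ?_
      filter_upwards [hae] with r hr
      have hxr : 0 ≤ x * r := by positivity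
      have h1 : Real.exp (-x * r) - 1 + x * r ≤ (x * r) ^ 2 / 2 := by
        have := exp_sq_bound_aux (x * r) hxr; simpa [neg_mul] using this
      have h2 : Real.exp (-x * r) - 1 + x * r ≤ x * r := by
        have : Real.exp (-x * r) ≤ 1 := Real.exp_le_one_iff.2 (by nlinarith)
        linarith
      rcases le_total (x * r ^ 2 / 2) r with h | h
      · rw [min_eq_left h]; nlinarith
      · rw [min_eq_right h]; nlinarith
    have := hψ x
    nlinarith [hx]
  -- ### limit of λ / u(b,λ) as λ → 0⁺
  have hlim : ∀ b : ℝ, 0 < b →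
      Tendsto (fun lam => lam / u b lam) (𝓝[>] (0:ℝ)) (𝓝 (Real.exp (α * b))) := by
    intro b hb
    have hL : Tendsto (fun lam => Real.log lam - Real.log (u b lam)) (𝓝[>] (0:ℝ))
        (𝓝 (α * b)) := by
      rw [Metric.tendsto_nhds]
      intro ε hε
      have hε' : (0:ℝ) < ε / (2 * b) := by positivity
      have hub' := hub (ε / (2 * b)) hε'
      rw [eventually_iff, mem_nhdsGT_iff_exists_Ioo_subset] at hub'
      obtain ⟨δ, hδmem, hδ⟩ := hub'
      filter_upwards [Ioo_mem_nhdsGT hδmem] with lam hlam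
      have hlam0 : 0 < lam := hlam.1
      obtain ⟨hm0, hmle, hint⟩ := hu b lam hb.le hlam0
      set m := u b lam with hm
      set ε' := ε / (2 * b) with hε'def
      have hαε : 0 < α + ε' := by positivity
      have keyU : Real.log lam - Real.log m ≤ (α + ε') * b := by
        have hcmp : ∀ x ∈ Set.Icc m lam, ((α + ε') * x)⁻¹ ≤ (ψ x)⁻¹ := by
          intro x hx
          have hx0 : 0 < x := lt_of_lt_of_le hm0 hx.1
          have hxδ : x < δ := lt_of_le_of_lt hx.2 hlam.2
          exact inv_anti₀ (hpos x hx0) (hδ ⟨hx0, hxδ⟩)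
        have hcont : IntervalIntegrable (fun x => ((α + ε') * x)⁻¹) volume m lam := by
          apply ContinuousOn.intervalIntegrable
          apply ContinuousOn.inv₀
          · exact (continuous_const.mul continuous_id).continuousOn
          · intro x hx
            rw [Set.uIcc_of_le hmle] at hx
            have hx0 : 0 < x := lt_of_lt_of_le hm0 hx.1
            positivity
        have hle : (∫ x in m..lam, ((α + ε') * x)⁻¹) ≤ ∫ x in m..lam, (ψ x)⁻¹ :=
          intervalIntegral.integral_mono_on hmle hcont (hII m lam hm0 hlam0) hcmp
        have hcalc : (∫ x in m..lam, ((α + ε') * x)⁻¹)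
            = (α + ε')⁻¹ * (Real.log lam - Real.log m) := by
          simp_rw [mul_inv]
          rw [intervalIntegral.integral_const_mul, integral_inv_of_pos hm0 hlam0,
            Real.log_div hlam0.ne' hm0.ne']
        rw [hint] at hle
        rw [hcalc] at hle
        rw [← sub_nonneg]
        have h2 : (α + ε') * ((α + ε')⁻¹ * (Real.log lam - Real.log m)) ≤ (α + ε') * b :=
          mul_le_mul_of_nonneg_left hle hαε.le
        rw [← mul_assoc, mul_inv_cancel₀ hαε.ne', one_mul] at h2
        linarith
      have keyL : α * b ≤ Real.log lam - Real.log m := by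
        rcases eq_or_lt_of_le hα with h0 | h0
        · have : Real.log m ≤ Real.log lam := Real.log_le_log hm0 hmle
          nlinarith
        · have hcmp : ∀ x ∈ Set.Icc m lam, (ψ x)⁻¹ ≤ (α * x)⁻¹ := by
            intro x hx
            have hx0 : 0 < x := lt_of_lt_of_le hm0 hx.1
            exact inv_anti₀ (by positivity) (hψlb x hx0.le)
          have hcont : IntervalIntegrable (fun x => (α * x)⁻¹) volume m lam := by
            apply ContinuousOn.intervalIntegrable
            apply ContinuousOn.inv₀
            · exact (continuous_const.mul continuous_id).continuousOn
            · intro x hx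
              rw [Set.uIcc_of_le hmle] at hx
              have hx0 : 0 < x := lt_of_lt_of_le hm0 hx.1
              positivity
          have hle : (∫ x in m..lam, (ψ x)⁻¹) ≤ ∫ x in m..lam, (α * x)⁻¹ :=
            intervalIntegral.integral_mono_on hmle (hII m lam hm0 hlam0) hcont hcmp
          have hcalc : (∫ x in m..lam, (α * x)⁻¹)
              = α⁻¹ * (Real.log lam - Real.log m) := by
            simp_rw [mul_inv]
            rw [intervalIntegral.integral_const_mul, integral_inv_of_pos hm0 hlam0,
              Real.log_div hlam0.ne' hm0.ne']
          rw [hint, hcalc] at hle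
          have h2 : α * b ≤ α * (α⁻¹ * (Real.log lam - Real.log m)) :=
            mul_le_mul_of_nonneg_left hle h0.le
          rwa [← mul_assoc, mul_inv_cancel₀ h0.ne', one_mul] at h2
      rw [Real.dist_eq, abs_sub_lt_iff]
      have hεb : ε' * b = ε / 2 := by
        rw [hε'def]; field_simp
      constructor <;> nlinarith
    have hcomp := (Real.continuous_exp.tendsto (α * b)).comp hL
    apply hcomp.congr'
    filter_upwards [self_mem_nhdsWithin] with lam hlam
    have hlam0 : (0:ℝ) < lam := hlam
    obtain ⟨hm0, _, _⟩ := hu b lam hb.le hlam0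
    show Real.exp (Real.log lam - Real.log (u b lam)) = lam / u b lam
    rw [Real.exp_sub, Real.exp_log hlam0, Real.exp_log hm0]
  -- ### v tends to 0 at infinity
  have hv0 : Tendsto v atTop (𝓝 0) := by
    rw [Metric.tendsto_atTop]
    intro ε hε
    refine ⟨max 1 ((∫ x in Set.Ioi ε, (ψ x)⁻¹) + 1), fun a ha => ?_⟩
    have ha0 : (0:ℝ) < a := lt_of_lt_of_le one_pos (le_trans (le_max_left _ _) ha)
    obtain ⟨hva, hvaint⟩ := hv a ha0
    rw [Real.dist_eq, sub_zero, abs_of_pos hva]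
    by_contra h
    push_neg at h
    have hsub : Set.Ioi (v a) ⊆ Set.Ioi ε := fun x hx => lt_of_le_of_lt h hx
    have hle : (∫ x in Set.Ioi (v a), (ψ x)⁻¹) ≤ ∫ x in Set.Ioi ε, (ψ x)⁻¹ := by
      apply setIntegral_mono_set (hIOn ε hε)
      · refine (ae_restrict_iff' measurableSet_Ioi).2 ?_
        filter_upwards with x hx
        exact inv_nonneg.2 (hpos x (hε.trans hx)).le
      · exact Filter.Eventually.of_forall hsub
    rw [hvaint] at hle
    have := le_trans (le_max_right 1 ((∫ x in Set.Ioi ε, (ψ x)⁻¹) + 1)) ha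
    linarith
  -- ### conclusion
  intro b hb
  have part1 : ∀ a, b < a → v a = u b (v (a - b)) := by
    intro a ha
    have hab : 0 < a - b := by linarith
    obtain ⟨hlam0v, hlamintv⟩ := hv (a - b) hab
    obtain ⟨hm0, hmle, hmint⟩ := hu b (v (a - b)) hb.le hlam0v
    obtain ⟨hva, hvaint⟩ := hv a (by linarith)
    apply hinj (v a) (u b (v (a - b))) hva hm0
    rw [hvaint, hsplit (u b (v (a - b))) (v (a - b)) hm0 hmle, hmint, hlamintv]
    ring
  refine ⟨part1, ?_⟩
  have hvb : Tendsto (fun a => v (a - b)) atTop (𝓝[>] (0:ℝ)) := by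
    rw [tendsto_nhdsWithin_iff]
    constructor
    · exact hv0.comp (tendsto_atTop_add_const_right atTop (-b) tendsto_id)
    · filter_upwards [eventually_gt_atTop b] with a ha
      exact (hv (a - b) (by linarith)).1
  have hcomp := (hlim b hb).comp hvb
  apply hcomp.congr'
  filter_upwards [eventually_gt_atTop b] with a ha
  show v (a - b) / u b (v (a - b)) = v (a - b) / v a
  rw [part1 a ha]
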